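/- The explicit Nil geodesic has constant speed with respect to the Nil metric: for all t ∈ ℝ, x′(t)² + (1 + x(t)²)·y′(t)² − 2·x(t)·y′(t)·z′(t) + z′(t)² = c² + w², where x′, y′, z′ denote the derivatives of the coordinate functions of γ. -/

import Mathlib

private lemma hasDerivAt_sin_lin (a b t : ℝ) :
    HasDerivAt (fun t => Real.sin (a * t + b)) (a * Real.cos (a * t + b)) t := by
  have h : HasDerivAt (fun t : ℝ => a * t + b) a t := by
    simpa using ((hasDerivAt_id t).const_mul a).add_const b
  exact ((Real.hasDerivAt_sin (a * t + b)).comp t h).congr_deriv (by ring : _ = a * Real.cos (a * t + b))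

private lemma hasDerivAt_cos_lin (a b t : ℝ) :
    HasDerivAt (fun t => Real.cos (a * t + b)) (-(a * Real.sin (a * t + b))) t := by
  have h : HasDerivAt (fun t : ℝ => a * t + b) a t := by
    simpa using ((hasDerivAt_id t).const_mul a).add_const b
  exact ((Real.hasDerivAt_cos (a * t + b)).comp t h).congr_deriv (by ring : _ = -(a * Real.sin (a * t + b)))

theorem nil_geodesic_constant_speed (c α w : ℝ) (hw : w ≠ 0)
    (x y z : ℝ → ℝ)
    (hx : ∀ t, x t = (c / w) * (Real.sin (w * t + α) - Real.sin α))
    (hy : ∀ t, y t = -(c / w) * (Real.cos (w * t + α) - Real.cos α))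
    (hz : ∀ t, z t =
      t * (w + c ^ 2 / (2 * w))
      - (c ^ 2 / (4 * w ^ 2)) * (Real.sin (2 * w * t + 2 * α) - Real.sin (2 * α))
      + (c ^ 2 / (2 * w ^ 2)) *
          (Real.sin (w * t + 2 * α) - Real.sin (2 * α) - Real.sin (w * t))) :
    ∀ t : ℝ,
      (deriv x t) ^ 2 + (1 + (x t) ^ 2) * (deriv y t) ^ 2
        - 2 * x t * deriv y t * deriv z t + (deriv z t) ^ 2 = c ^ 2 + w ^ 2 := by
  intro t
  have hxf : x = fun t => (c / w) * (Real.sin (w * t + α) - Real.sin α) := funext hx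
  have hyf : y = fun t => -(c / w) * (Real.cos (w * t + α) - Real.cos α) := funext hy
  have hzf : z = fun t =>
      t * (w + c ^ 2 / (2 * w))
      - (c ^ 2 / (4 * w ^ 2)) * (Real.sin (2 * w * t + 2 * α) - Real.sin (2 * α))
      + (c ^ 2 / (2 * w ^ 2)) *
          (Real.sin (w * t + 2 * α) - Real.sin (2 * α) - Real.sin (w * t)) := funext hz
  have hdx : HasDerivAt x (c * Real.cos (w * t + α)) t := by
    rw [hxf]
    have := ((hasDerivAt_sin_lin w α t).sub_const (Real.sin α)).const_mul (c / w)
    refine this.congr_deriv ?_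
    field_simp
  have hdy : HasDerivAt y (c * Real.sin (w * t + α)) t := by
    rw [hyf]
    have := ((hasDerivAt_cos_lin w α t).sub_const (Real.cos α)).const_mul (-(c / w))
    refine this.congr_deriv ?_
    field_simp
  have hdz : HasDerivAt z
      ((w + c ^ 2 / (2 * w))
        - (c ^ 2 / (4 * w ^ 2)) * (2 * w * Real.cos (2 * w * t + 2 * α))
        + (c ^ 2 / (2 * w ^ 2)) *
            (w * Real.cos (w * t + 2 * α) - w * Real.cos (w * t))) t := by
    rw [hzf]
    have h1 : HasDerivAt (fun t : ℝ => t * (w + c ^ 2 / (2 * w))) (w + c ^ 2 / (2 * w)) t := by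
      simpa using (hasDerivAt_id t).mul_const (w + c ^ 2 / (2 * w))
    have h2 := ((hasDerivAt_sin_lin (2 * w) (2 * α) t).sub_const (Real.sin (2 * α))).const_mul
      (c ^ 2 / (4 * w ^ 2))
    have h3a := (hasDerivAt_sin_lin w (2 * α) t).sub_const (Real.sin (2 * α))
    have h3b : HasDerivAt (fun t : ℝ => Real.sin (w * t)) (w * Real.cos (w * t)) t := by
      simpa using hasDerivAt_sin_lin w 0 t
    have h3 := (h3a.sub h3b).const_mul (c ^ 2 / (2 * w ^ 2))
    exact ((h1.sub h2).add h3).congr_deriv (by ring)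
  have hpy : Real.sin (w * t + α) ^ 2 + Real.cos (w * t + α) ^ 2 = 1 :=
    Real.sin_sq_add_cos_sq _
  have e1 : Real.cos (2 * w * t + 2 * α) = 1 - 2 * Real.sin (w * t + α) ^ 2 := by
    rw [show 2 * w * t + 2 * α = 2 * (w * t + α) by ring, Real.cos_two_mul']
    linarith [hpy]
  have e2 : Real.cos (w * t + 2 * α) =
      Real.cos (w * t + α) * Real.cos α - Real.sin (w * t + α) * Real.sin α := by
    rw [show w * t + 2 * α = (w * t + α) + α by ring, Real.cos_add]
  have e3 : Real.cos (w * t) =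
      Real.cos (w * t + α) * Real.cos α + Real.sin (w * t + α) * Real.sin α := by
    have := Real.cos_sub (w * t + α) α
    rw [show w * t + α - α = w * t by ring] at this
    exact this
  have hdz' : deriv z t =
      w + (c ^ 2 / w) * (Real.sin (w * t + α) ^ 2
        - Real.sin (w * t + α) * Real.sin α) := by
    rw [hdz.deriv, e1, e2, e3]
    field_simp
    ring
  rw [hdx.deriv, hdy.deriv, hdz', hx t]
  field_simp
  linear_combination (c ^ 2 * w ^ 2) * hpy
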